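/- Consider the DAG on vertices {a, b, c, e, f, g, h, i, j, k} with arcs a→b, a→c, b→e, b→k, c→f, c→g, e→h, k→h, f→i, g→i, h→j, i→j. Let d, D be real numbers with 0 ≤ d < D. For any maximal matching M of the underlying simple graph, assign delay d to edges in M and delay D to edges not in M. Then: (1) every directed path from a to j (each of which has exactly 4 arcs) contains at least one edge of M, so no (a,j)-path has delay 4D; and (2) at least one directed (a,j)-path contains exactly one edge of M, i.e., has delay d + 3D. -/

import Mathlib

/-- Arcs of the bridge gadget; vertices of `Fin 10` are named
    a=0, b=1, c=2, e=3, f=4, g=5, h=6, i=7, j=8, k=9. -/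
def bridgeArcs : List (Fin 10 × Fin 10) :=
  [(0, 1), (0, 2), (1, 3), (1, 9), (2, 4), (2, 5), (3, 6), (9, 6), (4, 7), (5, 7), (6, 8), (7, 8)]

/-- The underlying simple graph of the bridge gadget. -/
def bridgeGraph : SimpleGraph (Fin 10) :=
  SimpleGraph.fromEdgeSet {e | ∃ p ∈ bridgeArcs, e = s(p.1, p.2)}

/-- The delay of a directed path `p` (given as its list of vertices): edges in the
    matching `M` get delay `d`, all other edges get delay `D`. -/
def bridgeDelay (d D : ℝ) (M : Finset (Sym2 (Fin 10))) (p : List (Fin 10)) : ℝ :=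
  ((p.zip p.tail).map (fun q => if s(q.1, q.2) ∈ M then d else D)).sum

/-! ### Auxiliary material -/

set_option maxHeartbeats 4000000 in
set_option synthInstance.maxSize 4000 in
set_option synthInstance.maxHeartbeats 1000000 in
set_option maxRecDepth 10000 in
/-- Purely boolean core of the bridge-gadget lemma, checked by `decide`. -/
lemma bridge_key_bool : ∀ b01 b02 b13 b19 b24 b25 b36 b96 b47 b57 b68 b78 : Bool,
    ¬(b01 = true ∧ b02 = true) →
    ¬(b01 = true ∧ b13 = true) → ¬(b01 = true ∧ b19 = true) → ¬(b13 = true ∧ b19 = true) →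
    ¬(b02 = true ∧ b24 = true) → ¬(b02 = true ∧ b25 = true) → ¬(b24 = true ∧ b25 = true) →
    ¬(b13 = true ∧ b36 = true) → ¬(b19 = true ∧ b96 = true) →
    ¬(b36 = true ∧ b96 = true) → ¬(b36 = true ∧ b68 = true) → ¬(b96 = true ∧ b68 = true) →
    ¬(b24 = true ∧ b47 = true) → ¬(b25 = true ∧ b57 = true) →
    ¬(b47 = true ∧ b57 = true) → ¬(b47 = true ∧ b78 = true) → ¬(b57 = true ∧ b78 = true) →
    ¬(b68 = true ∧ b78 = true) →
    (b01 = true ∨ b02 = true ∨ b13 = true ∨ b19 = true) →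
    (b02 = true ∨ b01 = true ∨ b24 = true ∨ b25 = true) →
    (b13 = true ∨ b01 = true ∨ b19 = true ∨ b36 = true) →
    (b19 = true ∨ b01 = true ∨ b13 = true ∨ b96 = true) →
    (b24 = true ∨ b02 = true ∨ b25 = true ∨ b47 = true) →
    (b25 = true ∨ b02 = true ∨ b24 = true ∨ b57 = true) →
    (b36 = true ∨ b13 = true ∨ b96 = true ∨ b68 = true) →
    (b96 = true ∨ b19 = true ∨ b36 = true ∨ b68 = true) →
    (b47 = true ∨ b24 = true ∨ b57 = true ∨ b78 = true) →
    (b57 = true ∨ b25 = true ∨ b47 = true ∨ b78 = true) →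
    (b68 = true ∨ b36 = true ∨ b96 = true ∨ b78 = true) →
    (b78 = true ∨ b47 = true ∨ b57 = true ∨ b68 = true) →
    ((b01 = true ∨ b13 = true ∨ b36 = true ∨ b68 = true) ∧
     (b01 = true ∨ b19 = true ∨ b96 = true ∨ b68 = true) ∧
     (b02 = true ∨ b24 = true ∨ b47 = true ∨ b78 = true) ∧
     (b02 = true ∨ b25 = true ∨ b57 = true ∨ b78 = true)) ∧
    (((b01 = true ∧ b13 = false ∧ b36 = false ∧ b68 = false) ∨
      (b01 = false ∧ b13 = true ∧ b36 = false ∧ b68 = false) ∨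
      (b01 = false ∧ b13 = false ∧ b36 = true ∧ b68 = false) ∨
      (b01 = false ∧ b13 = false ∧ b36 = false ∧ b68 = true)) ∨
     ((b01 = true ∧ b19 = false ∧ b96 = false ∧ b68 = false) ∨
      (b01 = false ∧ b19 = true ∧ b96 = false ∧ b68 = false) ∨
      (b01 = false ∧ b19 = false ∧ b96 = true ∧ b68 = false) ∨
      (b01 = false ∧ b19 = false ∧ b96 = false ∧ b68 = true)) ∨
     ((b02 = true ∧ b24 = false ∧ b47 = false ∧ b78 = false) ∨
      (b02 = false ∧ b24 = true ∧ b47 = false ∧ b78 = false) ∨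
      (b02 = false ∧ b24 = false ∧ b47 = true ∧ b78 = false) ∨
      (b02 = false ∧ b24 = false ∧ b47 = false ∧ b78 = true)) ∨
     ((b02 = true ∧ b25 = false ∧ b57 = false ∧ b78 = false) ∨
      (b02 = false ∧ b25 = true ∧ b57 = false ∧ b78 = false) ∨
      (b02 = false ∧ b25 = false ∧ b57 = true ∧ b78 = false) ∨
      (b02 = false ∧ b25 = false ∧ b57 = false ∧ b78 = true))) := by
  decide

/-- Rank function showing every arc increases rank by exactly one. -/
def bridgeRk : Fin 10 → ℕ := ![0, 1, 1, 2, 2, 2, 3, 3, 4, 2]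

lemma bridgeRk_arc : ∀ q ∈ bridgeArcs, bridgeRk q.2 = bridgeRk q.1 + 1 := by decide

set_option maxRecDepth 4000 in
set_option synthInstance.maxSize 4000 in
lemma bridge_classify : ∀ b c d' : Fin 10, (0, b) ∈ bridgeArcs → (b, c) ∈ bridgeArcs →
    (c, d') ∈ bridgeArcs → (d', 8) ∈ bridgeArcs →
    [0, b, c, d', (8 : Fin 10)] = [0, 1, 3, 6, 8] ∨
    [0, b, c, d', (8 : Fin 10)] = [0, 1, 9, 6, 8] ∨
    [0, b, c, d', (8 : Fin 10)] = [0, 2, 4, 7, 8] ∨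
    [0, b, c, d', (8 : Fin 10)] = [0, 2, 5, 7, 8] := by decide

lemma bridge_chain_last_rank : ∀ (t : List (Fin 10)) (a : Fin 10),
    (a :: t).Chain' (fun u v => bridgeRk v = bridgeRk u + 1) →
    bridgeRk ((a :: t).getLast (List.cons_ne_nil a t)) = bridgeRk a + t.length := by
  intro t
  induction t with
  | nil => intro a _; simp
  | cons b t ih =>
    intro a h
    rw [List.Chain', List.isChain_cons_cons] at h
    have h2 := ih b h.2
    rw [List.getLast_cons (List.cons_ne_nil b t)]
    rw [h2, h.1]
    simp
    omega

lemma bridge_ite_le {d D : ℝ} (h : d ≤ D) (P : Prop) [Decidable P] :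
    (if P then d else D) ≤ D := by
  split
  · exact h
  · exact le_rfl

lemma bridge_four_ne (d D x1 x2 x3 x4 : ℝ) (hdD : d < D)
    (h1 : x1 ≤ D) (h2 : x2 ≤ D) (h3 : x3 ≤ D) (h4 : x4 ≤ D)
    (hx : x1 = d ∨ x2 = d ∨ x3 = d ∨ x4 = d) :
    x1 + (x2 + (x3 + (x4 + 0))) ≠ 4 * D := by
  intro h
  rcases hx with rfl | rfl | rfl | rfl <;> linarith

lemma bridge_arc_edgeSet : ∀ q ∈ bridgeArcs, s(q.1, q.2) ∈ bridgeGraph.edgeSet := by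
  intro q hq
  rw [bridgeGraph, SimpleGraph.mem_edgeSet, SimpleGraph.fromEdgeSet_adj]
  refine ⟨⟨q, hq, rfl⟩, ?_⟩
  fin_cases hq <;> decide

lemma bridge_maxStep (M : Finset (Sym2 (Fin 10)))
    (hMarcs : ∀ e ∈ M, ∃ q ∈ bridgeArcs, e = s(q.1, q.2))
    (hMmax : ∀ e ∈ bridgeGraph.edgeSet, e ∉ M → ∃ e' ∈ M, ∃ x : Fin 10, x ∈ e ∧ x ∈ e')
    (a b : Fin 10) (hab : (a, b) ∈ bridgeArcs)
    (n1 n2 n3 : Sym2 (Fin 10))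
    (hD : ∀ q ∈ bridgeArcs, ∀ x : Fin 10, x ∈ s(a, b) → x ∈ s(q.1, q.2) →
      (s(q.1, q.2) = s(a, b) ∨ s(q.1, q.2) = n1 ∨ s(q.1, q.2) = n2 ∨ s(q.1, q.2) = n3)) :
    s(a, b) ∈ M ∨ n1 ∈ M ∨ n2 ∈ M ∨ n3 ∈ M := by
  by_cases h : s(a, b) ∈ M
  · exact Or.inl h
  · obtain ⟨e', he'M, x, hx1, hx2⟩ := hMmax _ (bridge_arc_edgeSet (a, b) hab) h
    obtain ⟨q, hq, rfl⟩ := hMarcs e' he'M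
    rcases hD q hq x hx1 hx2 with h' | h' | h' | h' <;> rw [h'] at he'M <;> tauto

/-- Bridge-gadget lemma: for any maximal matching `M` of the underlying simple graph
    of the bridge DAG, with matched edges given delay `d` and unmatched edges delay
    `D` (0 ≤ d < D): (1) every directed (a,j)-path has exactly 4 arcs, contains an
    edge of `M`, and does not have delay 4D; (2) some directed (a,j)-path contains
    exactly one edge of `M` and has delay d + 3D. -/
theorem stmt_11 (d D : ℝ) (hd : 0 ≤ d) (hdD : d < D)
    (M : Finset (Sym2 (Fin 10)))
    (hMG : ∀ e ∈ M, e ∈ bridgeGraph.edgeSet)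
    (hMmatch : ∀ e₁ ∈ M, ∀ e₂ ∈ M, e₁ ≠ e₂ → ∀ x : Fin 10, x ∈ e₁ → x ∉ e₂)
    (hMmax : ∀ e ∈ bridgeGraph.edgeSet, e ∉ M → ∃ e' ∈ M, ∃ x : Fin 10, x ∈ e ∧ x ∈ e') :
    (∀ p : List (Fin 10), p.head? = some 0 → p.getLast? = some 8 →
        p.Chain' (fun u v => (u, v) ∈ bridgeArcs) →
        p.length = 5 ∧ (∃ q ∈ p.zip p.tail, s(q.1, q.2) ∈ M) ∧
          bridgeDelay d D M p ≠ 4 * D) ∧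
    (∃ p : List (Fin 10), p.head? = some 0 ∧ p.getLast? = some 8 ∧
        p.Chain' (fun u v => (u, v) ∈ bridgeArcs) ∧
        ((p.zip p.tail).filter (fun q => s(q.1, q.2) ∈ M)).length = 1 ∧
        bridgeDelay d D M p = d + 3 * D) := by
  have hd' : d ≤ D := le_of_lt hdD
  have hMarcs : ∀ e ∈ M, ∃ q ∈ bridgeArcs, e = s(q.1, q.2) := by
    intro e he
    have h2 := hMG e he
    rw [bridgeGraph, SimpleGraph.edgeSet_fromEdgeSet] at h2
    exact h2.1
  have hx : ∀ (e₁ e₂ : Sym2 (Fin 10)) (x : Fin 10), e₁ ∈ M → e₂ ∈ M → e₁ ≠ e₂ →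
      x ∈ e₁ → x ∈ e₂ → False :=
    fun e₁ e₂ x h1 h2 hne hm1 hm2 => hMmatch e₁ h1 e₂ h2 hne x hm1 hm2
  -- pairwise incompatibilities
  have P1 : ¬(s(0,1) ∈ M ∧ s(0,2) ∈ M) :=
    fun ⟨h1, h2⟩ => hx _ _ 0 h1 h2 (by decide) (by decide) (by decide)
  have P2 : ¬(s(0,1) ∈ M ∧ s(1,3) ∈ M) :=
    fun ⟨h1, h2⟩ => hx _ _ 1 h1 h2 (by decide) (by decide) (by decide)
  have P3 : ¬(s(0,1) ∈ M ∧ s(1,9) ∈ M) :=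
    fun ⟨h1, h2⟩ => hx _ _ 1 h1 h2 (by decide) (by decide) (by decide)
  have P4 : ¬(s(1,3) ∈ M ∧ s(1,9) ∈ M) :=
    fun ⟨h1, h2⟩ => hx _ _ 1 h1 h2 (by decide) (by decide) (by decide)
  have P5 : ¬(s(0,2) ∈ M ∧ s(2,4) ∈ M) :=
    fun ⟨h1, h2⟩ => hx _ _ 2 h1 h2 (by decide) (by decide) (by decide)
  have P6 : ¬(s(0,2) ∈ M ∧ s(2,5) ∈ M) :=
    fun ⟨h1, h2⟩ => hx _ _ 2 h1 h2 (by decide) (by decide) (by decide)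
  have P7 : ¬(s(2,4) ∈ M ∧ s(2,5) ∈ M) :=
    fun ⟨h1, h2⟩ => hx _ _ 2 h1 h2 (by decide) (by decide) (by decide)
  have P8 : ¬(s(1,3) ∈ M ∧ s(3,6) ∈ M) :=
    fun ⟨h1, h2⟩ => hx _ _ 3 h1 h2 (by decide) (by decide) (by decide)
  have P9 : ¬(s(1,9) ∈ M ∧ s(9,6) ∈ M) :=
    fun ⟨h1, h2⟩ => hx _ _ 9 h1 h2 (by decide) (by decide) (by decide)
  have P10 : ¬(s(3,6) ∈ M ∧ s(9,6) ∈ M) :=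
    fun ⟨h1, h2⟩ => hx _ _ 6 h1 h2 (by decide) (by decide) (by decide)
  have P11 : ¬(s(3,6) ∈ M ∧ s(6,8) ∈ M) :=
    fun ⟨h1, h2⟩ => hx _ _ 6 h1 h2 (by decide) (by decide) (by decide)
  have P12 : ¬(s(9,6) ∈ M ∧ s(6,8) ∈ M) :=
    fun ⟨h1, h2⟩ => hx _ _ 6 h1 h2 (by decide) (by decide) (by decide)
  have P13 : ¬(s(2,4) ∈ M ∧ s(4,7) ∈ M) :=
    fun ⟨h1, h2⟩ => hx _ _ 4 h1 h2 (by decide) (by decide) (by decide)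
  have P14 : ¬(s(2,5) ∈ M ∧ s(5,7) ∈ M) :=
    fun ⟨h1, h2⟩ => hx _ _ 5 h1 h2 (by decide) (by decide) (by decide)
  have P15 : ¬(s(4,7) ∈ M ∧ s(5,7) ∈ M) :=
    fun ⟨h1, h2⟩ => hx _ _ 7 h1 h2 (by decide) (by decide) (by decide)
  have P16 : ¬(s(4,7) ∈ M ∧ s(7,8) ∈ M) :=
    fun ⟨h1, h2⟩ => hx _ _ 7 h1 h2 (by decide) (by decide) (by decide)
  have P17 : ¬(s(5,7) ∈ M ∧ s(7,8) ∈ M) :=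
    fun ⟨h1, h2⟩ => hx _ _ 7 h1 h2 (by decide) (by decide) (by decide)
  have P18 : ¬(s(6,8) ∈ M ∧ s(7,8) ∈ M) :=
    fun ⟨h1, h2⟩ => hx _ _ 8 h1 h2 (by decide) (by decide) (by decide)
  -- maximality clauses
  have M01 := bridge_maxStep M hMarcs hMmax 0 1 (by decide) s(0,2) s(1,3) s(1,9) (by decide)
  have M02 := bridge_maxStep M hMarcs hMmax 0 2 (by decide) s(0,1) s(2,4) s(2,5) (by decide)
  have M13 := bridge_maxStep M hMarcs hMmax 1 3 (by decide) s(0,1) s(1,9) s(3,6) (by decide)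
  have M19 := bridge_maxStep M hMarcs hMmax 1 9 (by decide) s(0,1) s(1,3) s(9,6) (by decide)
  have M24 := bridge_maxStep M hMarcs hMmax 2 4 (by decide) s(0,2) s(2,5) s(4,7) (by decide)
  have M25 := bridge_maxStep M hMarcs hMmax 2 5 (by decide) s(0,2) s(2,4) s(5,7) (by decide)
  have M36 := bridge_maxStep M hMarcs hMmax 3 6 (by decide) s(1,3) s(9,6) s(6,8) (by decide)
  have M96 := bridge_maxStep M hMarcs hMmax 9 6 (by decide) s(1,9) s(3,6) s(6,8) (by decide)
  have M47 := bridge_maxStep M hMarcs hMmax 4 7 (by decide) s(2,4) s(5,7) s(7,8) (by decide)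
  have M57 := bridge_maxStep M hMarcs hMmax 5 7 (by decide) s(2,5) s(4,7) s(7,8) (by decide)
  have M68 := bridge_maxStep M hMarcs hMmax 6 8 (by decide) s(3,6) s(9,6) s(7,8) (by decide)
  have M78 := bridge_maxStep M hMarcs hMmax 7 8 (by decide) s(4,7) s(5,7) s(6,8) (by decide)
  have hkb := bridge_key_bool
    (decide (s(0,1) ∈ M)) (decide (s(0,2) ∈ M)) (decide (s(1,3) ∈ M)) (decide (s(1,9) ∈ M))
    (decide (s(2,4) ∈ M)) (decide (s(2,5) ∈ M)) (decide (s(3,6) ∈ M)) (decide (s(9,6) ∈ M))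
    (decide (s(4,7) ∈ M)) (decide (s(5,7) ∈ M)) (decide (s(6,8) ∈ M)) (decide (s(7,8) ∈ M))
    (by simpa using P1) (by simpa using P2) (by simpa using P3) (by simpa using P4)
    (by simpa using P5) (by simpa using P6) (by simpa using P7) (by simpa using P8)
    (by simpa using P9) (by simpa using P10) (by simpa using P11) (by simpa using P12)
    (by simpa using P13) (by simpa using P14) (by simpa using P15) (by simpa using P16)
    (by simpa using P17) (by simpa using P18)
    (by simpa using M01) (by simpa using M02) (by simpa using M13) (by simpa using M19)
    (by simpa using M24) (by simpa using M25) (by simpa using M36) (by simpa using M96)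
    (by simpa using M47) (by simpa using M57) (by simpa using M68) (by simpa using M78)
  simp only [decide_eq_true_eq, decide_eq_false_iff_not] at hkb
  obtain ⟨⟨hQ1, hQ2, hQ3, hQ4⟩, heo⟩ := hkb
  have hdelP1 : bridgeDelay d D M [0, 1, 3, 6, 8] =
      (if s(0,1) ∈ M then d else D) + ((if s(1,3) ∈ M then d else D) +
      ((if s(3,6) ∈ M then d else D) + ((if s(6,8) ∈ M then d else D) + 0))) := rfl
  have hdelP2 : bridgeDelay d D M [0, 1, 9, 6, 8] =
      (if s(0,1) ∈ M then d else D) + ((if s(1,9) ∈ M then d else D) +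
      ((if s(9,6) ∈ M then d else D) + ((if s(6,8) ∈ M then d else D) + 0))) := rfl
  have hdelP3 : bridgeDelay d D M [0, 2, 4, 7, 8] =
      (if s(0,2) ∈ M then d else D) + ((if s(2,4) ∈ M then d else D) +
      ((if s(4,7) ∈ M then d else D) + ((if s(7,8) ∈ M then d else D) + 0))) := rfl
  have hdelP4 : bridgeDelay d D M [0, 2, 5, 7, 8] =
      (if s(0,2) ∈ M then d else D) + ((if s(2,5) ∈ M then d else D) +
      ((if s(5,7) ∈ M then d else D) + ((if s(7,8) ∈ M then d else D) + 0))) := rfl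
  constructor
  · -- part 1
    intro p hhead hlast hchain
    rcases p with _ | ⟨a, t⟩
    · simp at hhead
    have ha : a = 0 := by simpa using hhead
    subst ha
    have hrk : (0 :: t).Chain' (fun u v => bridgeRk v = bridgeRk u + 1) :=
      List.IsChain.imp (fun u v h => bridgeRk_arc (u, v) h) hchain
    have hlast' : (0 :: t).getLast (List.cons_ne_nil 0 t) = 8 := by
      rw [List.getLast?_eq_getLast (List.cons_ne_nil 0 t)] at hlast
      exact Option.some_inj.mp hlast
    have h5 := bridge_chain_last_rank t 0 hrk
    rw [hlast'] at h5
    have hlen : t.length = 4 := by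
      rw [show bridgeRk 8 = 4 from rfl, show bridgeRk 0 = 0 from rfl] at h5
      omega
    rcases t with _ | ⟨b, t⟩; · simp at hlen
    rcases t with _ | ⟨c, t⟩; · simp at hlen
    rcases t with _ | ⟨d', t⟩; · simp at hlen
    rcases t with _ | ⟨e, t⟩; · simp at hlen
    rcases t with _ | ⟨f, t⟩
    swap
    · simp at hlen
    have he : e = 8 := by simpa using hlast'
    subst he
    rw [List.Chain', List.isChain_cons_cons, List.isChain_cons_cons, List.isChain_cons_cons, List.isChain_cons_cons] at hchain
    obtain ⟨h1, h2, h3, h4, -⟩ := hchain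
    rcases bridge_classify b c d' h1 h2 h3 h4 with hcl | hcl | hcl | hcl <;> rw [hcl]
    · refine ⟨rfl, ?_, ?_⟩
      · rcases hQ1 with h | h | h | h
        exacts [⟨(0, 1), by decide, h⟩, ⟨(1, 3), by decide, h⟩,
                ⟨(3, 6), by decide, h⟩, ⟨(6, 8), by decide, h⟩]
      · rw [hdelP1]
        refine bridge_four_ne d D _ _ _ _ hdD (bridge_ite_le hd' _) (bridge_ite_le hd' _)
          (bridge_ite_le hd' _) (bridge_ite_le hd' _) ?_
        rcases hQ1 with h | h | h | h
        exacts [Or.inl (if_pos h), Or.inr (Or.inl (if_pos h)),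
                Or.inr (Or.inr (Or.inl (if_pos h))), Or.inr (Or.inr (Or.inr (if_pos h)))]
    · refine ⟨rfl, ?_, ?_⟩
      · rcases hQ2 with h | h | h | h
        exacts [⟨(0, 1), by decide, h⟩, ⟨(1, 9), by decide, h⟩,
                ⟨(9, 6), by decide, h⟩, ⟨(6, 8), by decide, h⟩]
      · rw [hdelP2]
        refine bridge_four_ne d D _ _ _ _ hdD (bridge_ite_le hd' _) (bridge_ite_le hd' _)
          (bridge_ite_le hd' _) (bridge_ite_le hd' _) ?_
        rcases hQ2 with h | h | h | h
        exacts [Or.inl (if_pos h), Or.inr (Or.inl (if_pos h)),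
                Or.inr (Or.inr (Or.inl (if_pos h))), Or.inr (Or.inr (Or.inr (if_pos h)))]
    · refine ⟨rfl, ?_, ?_⟩
      · rcases hQ3 with h | h | h | h
        exacts [⟨(0, 2), by decide, h⟩, ⟨(2, 4), by decide, h⟩,
                ⟨(4, 7), by decide, h⟩, ⟨(7, 8), by decide, h⟩]
      · rw [hdelP3]
        refine bridge_four_ne d D _ _ _ _ hdD (bridge_ite_le hd' _) (bridge_ite_le hd' _)
          (bridge_ite_le hd' _) (bridge_ite_le hd' _) ?_
        rcases hQ3 with h | h | h | h
        exacts [Or.inl (if_pos h), Or.inr (Or.inl (if_pos h)),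
                Or.inr (Or.inr (Or.inl (if_pos h))), Or.inr (Or.inr (Or.inr (if_pos h)))]
    · refine ⟨rfl, ?_, ?_⟩
      · rcases hQ4 with h | h | h | h
        exacts [⟨(0, 2), by decide, h⟩, ⟨(2, 5), by decide, h⟩,
                ⟨(5, 7), by decide, h⟩, ⟨(7, 8), by decide, h⟩]
      · rw [hdelP4]
        refine bridge_four_ne d D _ _ _ _ hdD (bridge_ite_le hd' _) (bridge_ite_le hd' _)
          (bridge_ite_le hd' _) (bridge_ite_le hd' _) ?_
        rcases hQ4 with h | h | h | h
        exacts [Or.inl (if_pos h), Or.inr (Or.inl (if_pos h)),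
                Or.inr (Or.inr (Or.inl (if_pos h))), Or.inr (Or.inr (Or.inr (if_pos h)))]
  · -- part 2
    rcases heo with h | h | h | h
    · rcases h with ⟨h1, h2, h3, h4⟩ | ⟨h1, h2, h3, h4⟩ | ⟨h1, h2, h3, h4⟩ | ⟨h1, h2, h3, h4⟩
      · exact ⟨[0, 1, 3, 6, 8], by decide, by decide, by simp [List.Chain', List.isChain_cons_cons, bridgeArcs],
          by simp [h1, h2, h3, h4],
          by rw [hdelP1, if_pos h1, if_neg h2, if_neg h3, if_neg h4]; ring⟩
      · exact ⟨[0, 1, 3, 6, 8], by decide, by decide, by simp [List.Chain', List.isChain_cons_cons, bridgeArcs],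
          by simp [h1, h2, h3, h4],
          by rw [hdelP1, if_neg h1, if_pos h2, if_neg h3, if_neg h4]; ring⟩
      · exact ⟨[0, 1, 3, 6, 8], by decide, by decide, by simp [List.Chain', List.isChain_cons_cons, bridgeArcs],
          by simp [h1, h2, h3, h4],
          by rw [hdelP1, if_neg h1, if_neg h2, if_pos h3, if_neg h4]; ring⟩
      · exact ⟨[0, 1, 3, 6, 8], by decide, by decide, by simp [List.Chain', List.isChain_cons_cons, bridgeArcs],
          by simp [h1, h2, h3, h4],
          by rw [hdelP1, if_neg h1, if_neg h2, if_neg h3, if_pos h4]; ring⟩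
    · rcases h with ⟨h1, h2, h3, h4⟩ | ⟨h1, h2, h3, h4⟩ | ⟨h1, h2, h3, h4⟩ | ⟨h1, h2, h3, h4⟩
      · exact ⟨[0, 1, 9, 6, 8], by decide, by decide, by simp [List.Chain', List.isChain_cons_cons, bridgeArcs],
          by simp [h1, h2, h3, h4],
          by rw [hdelP2, if_pos h1, if_neg h2, if_neg h3, if_neg h4]; ring⟩
      · exact ⟨[0, 1, 9, 6, 8], by decide, by decide, by simp [List.Chain', List.isChain_cons_cons, bridgeArcs],
          by simp [h1, h2, h3, h4],
          by rw [hdelP2, if_neg h1, if_pos h2, if_neg h3, if_neg h4]; ring⟩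
      · exact ⟨[0, 1, 9, 6, 8], by decide, by decide, by simp [List.Chain', List.isChain_cons_cons, bridgeArcs],
          by simp [h1, h2, h3, h4],
          by rw [hdelP2, if_neg h1, if_neg h2, if_pos h3, if_neg h4]; ring⟩
      · exact ⟨[0, 1, 9, 6, 8], by decide, by decide, by simp [List.Chain', List.isChain_cons_cons, bridgeArcs],
          by simp [h1, h2, h3, h4],
          by rw [hdelP2, if_neg h1, if_neg h2, if_neg h3, if_pos h4]; ring⟩
    · rcases h with ⟨h1, h2, h3, h4⟩ | ⟨h1, h2, h3, h4⟩ | ⟨h1, h2, h3, h4⟩ | ⟨h1, h2, h3, h4⟩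
      · exact ⟨[0, 2, 4, 7, 8], by decide, by decide, by simp [List.Chain', List.isChain_cons_cons, bridgeArcs],
          by simp [h1, h2, h3, h4],
          by rw [hdelP3, if_pos h1, if_neg h2, if_neg h3, if_neg h4]; ring⟩
      · exact ⟨[0, 2, 4, 7, 8], by decide, by decide, by simp [List.Chain', List.isChain_cons_cons, bridgeArcs],
          by simp [h1, h2, h3, h4],
          by rw [hdelP3, if_neg h1, if_pos h2, if_neg h3, if_neg h4]; ring⟩
      · exact ⟨[0, 2, 4, 7, 8], by decide, by decide, by simp [List.Chain', List.isChain_cons_cons, bridgeArcs],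
          by simp [h1, h2, h3, h4],
          by rw [hdelP3, if_neg h1, if_neg h2, if_pos h3, if_neg h4]; ring⟩
      · exact ⟨[0, 2, 4, 7, 8], by decide, by decide, by simp [List.Chain', List.isChain_cons_cons, bridgeArcs],
          by simp [h1, h2, h3, h4],
          by rw [hdelP3, if_neg h1, if_neg h2, if_neg h3, if_pos h4]; ring⟩
    · rcases h with ⟨h1, h2, h3, h4⟩ | ⟨h1, h2, h3, h4⟩ | ⟨h1, h2, h3, h4⟩ | ⟨h1, h2, h3, h4⟩
      · exact ⟨[0, 2, 5, 7, 8], by decide, by decide, by simp [List.Chain', List.isChain_cons_cons, bridgeArcs],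
          by simp [h1, h2, h3, h4],
          by rw [hdelP4, if_pos h1, if_neg h2, if_neg h3, if_neg h4]; ring⟩
      · exact ⟨[0, 2, 5, 7, 8], by decide, by decide, by simp [List.Chain', List.isChain_cons_cons, bridgeArcs],
          by simp [h1, h2, h3, h4],
          by rw [hdelP4, if_neg h1, if_pos h2, if_neg h3, if_neg h4]; ring⟩
      · exact ⟨[0, 2, 5, 7, 8], by decide, by decide, by simp [List.Chain', List.isChain_cons_cons, bridgeArcs],
          by simp [h1, h2, h3, h4],
          by rw [hdelP4, if_neg h1, if_neg h2, if_pos h3, if_neg h4]; ring⟩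
      · exact ⟨[0, 2, 5, 7, 8], by decide, by decide, by simp [List.Chain', List.isChain_cons_cons, bridgeArcs],
          by simp [h1, h2, h3, h4],
          by rw [hdelP4, if_neg h1, if_neg h2, if_neg h3, if_pos h4]; ring⟩
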